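/- Let n ≥ 4 with n ≡ 1 (mod 3). Partition {1,...,n} into a set S₀ of 4 vertices and (n-4)/3 sets S₁,...,S_{(n-4)/3} of 3 vertices each, and let G_n be the graph in which any two vertices in different parts are adjacent and, within S₀, the four vertices form a 4-cycle (and each Sᵢ, i ≥ 1, is independent). Then G_n has exactly 4·3^{(n-4)/3} maximal cliques. -/

import Mathlib

open SimpleGraph

/-- `s` is a maximal clique of the simple graph `G`. -/
def MaxClique {V : Type*} (G : SimpleGraph V) (s : Set V) : Prop :=
  G.IsClique s ∧ ∀ t : Set V, G.IsClique t → s ⊆ t → s = t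

/-- The graph obtained from `G` by adding the edge `(u,v)`. -/
def addEdge {V : Type*} (G : SimpleGraph V) (u v : V) : SimpleGraph V :=
  G ⊔ SimpleGraph.fromEdgeSet {s(u, v)}

/-- The graph obtained from `G` by adding the set of edges `H`. -/
def addEdges {V : Type*} (G : SimpleGraph V) (H : Set (Sym2 V)) : SimpleGraph V :=
  G ⊔ SimpleGraph.fromEdgeSet H

/-- The number of maximal cliques of `G`. -/
noncomputable def numMaxCliques {V : Type*} (G : SimpleGraph V) : ℕ :=
  Nat.card {s : Set V // MaxClique G s}

/-- `f k`: the maximum possible number of maximal cliques in a graph on `k` vertices. -/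
noncomputable def maxNumMaxCliques (k : ℕ) : ℕ :=
  sSup {m | ∃ G : SimpleGraph (Fin k), m = numMaxCliques G}

/-- Index of the part containing vertex `i`: part 0 is `{0,1,2,3}`, then triples. -/
def part (n : ℕ) (i : Fin n) : ℕ := if (i : ℕ) < 4 then 0 else ((i : ℕ) - 4) / 3 + 1

/-- Adjacency in a 4-cycle on `{0,1,2,3}`. -/
def cyc4 (a b : ℕ) : Prop := (a + 1) % 4 = b % 4 ∨ (b + 1) % 4 = a % 4

/-- The complete multipartite graph with parts `S₀` of size 4 and triples,
    together with a 4-cycle added inside `S₀`. -/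
def Gmm (n : ℕ) : SimpleGraph (Fin n) where
  Adj i j := i ≠ j ∧ (part n i ≠ part n j ∨ ((i : ℕ) < 4 ∧ (j : ℕ) < 4 ∧ cyc4 i j))
  symm := by
    constructor
    intro i j ⟨h1, h2⟩
    refine ⟨h1.symm, ?_⟩
    rcases h2 with h | ⟨hi, hj, hc⟩
    · exact Or.inl h.symm
    · exact Or.inr ⟨hj, hi, hc.symm⟩
  loopless := by constructor; intro i h; exact h.1 rfl

/-- The complete multipartite graph `H_n` with one part of size 4 and triples. -/
def Hmm (n : ℕ) : SimpleGraph (Fin n) where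
  Adj i j := part n i ≠ part n j
  symm := by constructor; intro i j h; exact h.symm
  loopless := by constructor; intro i h; exact h rfl

namespace MMaux

lemma adj_iff {k : ℕ} (i j : Fin (3*k+4)) :
    (Gmm (3*k+4)).Adj i j ↔ (i:ℕ) ≠ (j:ℕ) ∧
      (¬(((i:ℕ)<4 ∧ (j:ℕ)<4) ∨ (4≤(i:ℕ) ∧ 4≤(j:ℕ) ∧ ((i:ℕ)-4)/3=((j:ℕ)-4)/3)) ∨
       ((i:ℕ)<4 ∧ (j:ℕ)<4 ∧ (((i:ℕ)+1)%4=((j:ℕ))%4 ∨ ((j:ℕ)+1)%4=((i:ℕ))%4))) := by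
  show (i ≠ j ∧ (part (3*k+4) i ≠ part (3*k+4) j ∨ _)) ↔ _
  unfold part cyc4
  rw [Ne, Fin.ext_iff]
  constructor <;> rintro ⟨h1, h2⟩ <;> refine ⟨h1, ?_⟩ <;>
    split_ifs at h2 ⊢ <;> omega

/-- The clique determined by a choice of cycle edge `a` and triple choices `f`. -/
def clOf (k : ℕ) (a : Fin 4) (f : Fin k → Fin 3) : Set (Fin (3*k+4)) :=
  {v | (v:ℕ) = (a:ℕ) ∨ (v:ℕ) = ((a:ℕ)+1)%4 ∨ ∃ j : Fin k, (v:ℕ) = 4+3*(j:ℕ)+((f j):ℕ)}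

lemma clique_clOf (k : ℕ) (a : Fin 4) (f : Fin k → Fin 3) :
    (Gmm (3*k+4)).IsClique (clOf k a f) := by
  intro u hu v hv huv
  rw [adj_iff]
  have hval : (u:ℕ) ≠ (v:ℕ) := fun h => huv (Fin.ext h)
  refine ⟨hval, ?_⟩
  have ha4 : (a:ℕ) < 4 := a.isLt
  rcases hu with hu | hu | ⟨j, hj⟩ <;> rcases hv with hv | hv | ⟨j', hj'⟩
  · omega
  · right; omega
  · left; have := j'.isLt; have := (f j').isLt; omega
  · right; omega
  · omega
  · left; have := j'.isLt; have := (f j').isLt; omega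
  · left; have := j.isLt; have := (f j).isLt; omega
  · left; have := j.isLt; have := (f j).isLt; omega
  · by_cases hjj : j = j'
    · subst hjj; omega
    · left
      have hjv : (j:ℕ) ≠ (j':ℕ) := fun h => hjj (Fin.ext h)
      have := (f j).isLt; have := (f j').isLt; omega

lemma maxclique_clOf (k : ℕ) (a : Fin 4) (f : Fin k → Fin 3) :
    MaxClique (Gmm (3*k+4)) (clOf k a f) := by
  refine ⟨clique_clOf k a f, ?_⟩
  intro t ht hsub
  have ha4 : (a:ℕ) < 4 := a.isLt
  ext w
  refine ⟨fun h => hsub h, fun hw => ?_⟩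
  by_contra hwn
  simp only [clOf, Set.mem_setOf_eq, not_or, not_exists] at hwn
  obtain ⟨hw1, hw2, hw3⟩ := hwn
  by_cases hlt : (w:ℕ) < 4
  · -- w is in the base part; adjacent to both endpoints of the edge: impossible
    set va : Fin (3*k+4) := ⟨(a:ℕ), by omega⟩ with hva
    set vb : Fin (3*k+4) := ⟨((a:ℕ)+1)%4, by omega⟩ with hvb
    have hma : va ∈ t := hsub (Or.inl rfl)
    have hmb : vb ∈ t := hsub (Or.inr (Or.inl rfl))
    have h1 : (Gmm (3*k+4)).Adj w va := ht hw hma (fun h => hw1 (by rw [h]))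
    have h2 : (Gmm (3*k+4)).Adj w vb := ht hw hmb (fun h => hw2 (by rw [h]))
    rw [adj_iff] at h1 h2
    simp only [hva, hvb] at h1 h2
    omega
  · -- w is in a triple; it must equal the chosen vertex
    have hjk : ((w:ℕ)-4)/3 < k := by have := w.isLt; omega
    set j : Fin k := ⟨((w:ℕ)-4)/3, hjk⟩ with hjd
    set x : Fin (3*k+4) := ⟨4+3*(j:ℕ)+((f j):ℕ), by have := j.isLt; have := (f j).isLt; omega⟩ with hxd
    have hmx : x ∈ t := hsub (Or.inr (Or.inr ⟨j, rfl⟩))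
    have hne : w ≠ x := fun h => hw3 j (by rw [h])
    have h1 : (Gmm (3*k+4)).Adj w x := ht hw hmx hne
    rw [adj_iff] at h1
    simp only [hxd] at h1
    have := (f j).isLt
    have hjv : (j:ℕ) = ((w:ℕ)-4)/3 := rfl
    omega

lemma clOf_inj (k : ℕ) : Function.Injective
    (fun p : Fin 4 × (Fin k → Fin 3) => clOf k p.1 p.2) := by
  rintro ⟨a, f⟩ ⟨a', f'⟩ heq
  simp only [Prod.mk.injEq]
  have ha4 : (a:ℕ) < 4 := a.isLt
  have ha4' : (a':ℕ) < 4 := a'.isLt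
  have hmem : ∀ v : Fin (3*k+4), v ∈ clOf k a f ↔ v ∈ clOf k a' f' := by
    intro v; rw [show clOf k a f = clOf k a' f' from heq]
  constructor
  · -- a = a'
    have h1 : (⟨(a:ℕ), by omega⟩ : Fin (3*k+4)) ∈ clOf k a' f' :=
      (hmem _).1 (Or.inl rfl)
    have h2 : (⟨(a':ℕ), by omega⟩ : Fin (3*k+4)) ∈ clOf k a f :=
      (hmem _).2 (Or.inl rfl)
    rcases h1 with h1 | h1 | ⟨j, hj⟩
    · exact Fin.ext h1
    · rcases h2 with h2 | h2 | ⟨j', hj'⟩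
      · exact Fin.ext h2.symm
      · exfalso; simp only [Fin.val_mk] at h1 h2; omega
      · exfalso; have := j'.isLt; have := (f j').isLt
        simp only [Fin.val_mk] at hj'; omega
    · exfalso; have := j.isLt; have := (f' j).isLt
      simp only [Fin.val_mk] at hj; omega
  · -- f = f'
    funext j
    have hb := j.isLt; have hc := (f j).isLt
    have h1 : (⟨4+3*(j:ℕ)+((f j):ℕ), by omega⟩ : Fin (3*k+4)) ∈ clOf k a' f' :=
      (hmem _).1 (Or.inr (Or.inr ⟨j, rfl⟩))
    rcases h1 with h1 | h1 | ⟨j', hj'⟩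
    · exfalso; simp only [Fin.val_mk] at h1; omega
    · exfalso; simp only [Fin.val_mk] at h1; omega
    · simp only [Fin.val_mk] at hj'
      have := j'.isLt; have := (f' j').isLt
      have hjj : j = j' := Fin.ext (by omega)
      subst hjj
      exact Fin.ext (by omega)

end MMaux
namespace MMaux

lemma clOf_surj (k : ℕ) (s : Set (Fin (3*k+4))) (hmc : MaxClique (Gmm (3*k+4)) s) :
    ∃ a : Fin 4, ∃ f : Fin k → Fin 3, clOf k a f = s := by
  obtain ⟨hcl, hmax⟩ := hmc
  -- Step 1: each triple contains exactly one vertex of s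
  have step1 : ∀ j : Fin k, ∃ t : Fin 3,
      (⟨4+3*(j:ℕ)+(t:ℕ), by have := j.isLt; have := t.isLt; omega⟩ : Fin (3*k+4)) ∈ s := by
    intro j
    by_contra hno
    push_neg at hno
    have hjk := j.isLt
    -- no vertex of s lies in triple j
    have hnone : ∀ y ∈ s, (y:ℕ) < 4 ∨ ((y:ℕ)-4)/3 ≠ (j:ℕ) := by
      intro y hy
      by_contra hcon
      push_neg at hcon
      obtain ⟨hy4, hyj⟩ := hcon
      have h4 : 4 ≤ (y:ℕ) := by omega
      have := hno ⟨((y:ℕ)-4)%3, by omega⟩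
      exact this (by convert hy using 2; simp; omega)
    set x0 : Fin (3*k+4) := ⟨4+3*(j:ℕ), by omega⟩ with hx0
    have hx0n : x0 ∉ s := by
      intro h
      rcases hnone x0 h with h' | h' <;> simp [hx0] at h' <;> omega
    have hins : (Gmm (3*k+4)).IsClique (insert x0 s) := by
      refine hcl.insert ?_
      intro b hb hbne
      rw [adj_iff]
      have hb' := hnone b hb
      have hbv : (x0:ℕ) ≠ (b:ℕ) := fun h => hbne (Fin.ext h)
      refine ⟨hbv, Or.inl ?_⟩
      simp only [hx0, Fin.val_mk] at hbv ⊢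
      have := b.isLt
      omega
    have := hmax _ hins (Set.subset_insert _ _)
    exact hx0n (this ▸ Set.mem_insert x0 s)
  choose f hf using step1
  -- Step 2: the base part contains an edge of the cycle
  have hbase : ∃ b ∈ s, (b:ℕ) < 4 := by
    by_contra hno
    push_neg at hno
    set x0 : Fin (3*k+4) := ⟨0, by omega⟩ with hx0
    have hx0n : x0 ∉ s := fun h => by have := hno x0 h; simp [hx0] at this
    have hins : (Gmm (3*k+4)).IsClique (insert x0 s) := by
      refine hcl.insert ?_
      intro b hb hbne
      rw [adj_iff]
      have hb4 := hno b hb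
      have := b.isLt
      simp only [hx0, Fin.val_mk]
      omega
    have := hmax _ hins (Set.subset_insert _ _)
    exact hx0n (this ▸ Set.mem_insert x0 s)
  obtain ⟨b, hbs, hb4⟩ := hbase
  have hsecond : ∃ c ∈ s, (c:ℕ) < 4 ∧ c ≠ b := by
    by_contra hno
    push_neg at hno
    set x0 : Fin (3*k+4) := ⟨((b:ℕ)+1)%4, by omega⟩ with hx0
    have hx0ne : x0 ≠ b := by
      intro h
      rw [hx0] at h
      have h' : ((b:ℕ)+1)%4 = (b:ℕ) := by
        have := congrArg Fin.val h
        simpa using this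
      omega
    have hx0n : x0 ∉ s := fun h => hx0ne (hno x0 h (by simp [hx0]; omega))
    have hins : (Gmm (3*k+4)).IsClique (insert x0 s) := by
      refine hcl.insert ?_
      intro y hy hyne
      rw [adj_iff]
      have hyv : (x0:ℕ) ≠ (y:ℕ) := fun h => hyne (Fin.ext h)
      refine ⟨hyv, ?_⟩
      by_cases hy4 : (y:ℕ) < 4
      · have : y = b := hno y hy hy4
        subst this
        right
        simp only [hx0, Fin.val_mk]
        omega
      · left
        simp only [hx0, Fin.val_mk]
        omega
    have := hmax _ hins (Set.subset_insert _ _)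
    exact hx0n (this ▸ Set.mem_insert x0 s)
  obtain ⟨c, hcs, hc4, hcb⟩ := hsecond
  have hadjbc : (Gmm (3*k+4)).Adj b c := hcl hbs hcs (fun h => hcb h.symm)
  rw [adj_iff] at hadjbc
  -- get the base endpoint a with a ∈ s and (a+1)%4 ∈ s
  have hedge : ∃ a : Fin 4, ((⟨(a:ℕ), by omega⟩ : Fin (3*k+4)) ∈ s) ∧
      (⟨((a:ℕ)+1)%4, by omega⟩ : Fin (3*k+4)) ∈ s := by
    rcases hadjbc with ⟨hne, h | h⟩
    · omega
    · obtain ⟨_, _, h | h⟩ := h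
      · exact ⟨⟨(b:ℕ), hb4⟩, by simpa using hbs, by
          have : (⟨((b:ℕ)+1)%4, by omega⟩ : Fin (3*k+4)) = c :=
            Fin.ext (show ((b:ℕ)+1)%4 = (c:ℕ) by omega)
          rw [this]; exact hcs⟩
      · exact ⟨⟨(c:ℕ), hc4⟩, by simpa using hcs, by
          have : (⟨((c:ℕ)+1)%4, by omega⟩ : Fin (3*k+4)) = b :=
            Fin.ext (show ((c:ℕ)+1)%4 = (b:ℕ) by omega)
          rw [this]; exact hbs⟩
  obtain ⟨a, has, has'⟩ := hedge
  have ha4 : (a:ℕ) < 4 := a.isLt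
  refine ⟨a, f, ?_⟩
  -- uniqueness within a triple
  have huniq : ∀ y ∈ s, 4 ≤ (y:ℕ) → ∀ j : Fin k, ((y:ℕ)-4)/3 = (j:ℕ) →
      (y:ℕ) = 4+3*(j:ℕ)+((f j):ℕ) := by
    intro y hy hy4 j hyj
    by_contra hne
    have hxs := hf j
    have hadj := hcl hy hxs (fun h => hne (by rw [h]))
    rw [adj_iff] at hadj
    simp only [Fin.val_mk] at hadj
    have := (f j).isLt
    omega
  -- similarly base: every base vertex of s is a or (a+1)%4
  have hbase2 : ∀ y ∈ s, (y:ℕ) < 4 → (y:ℕ) = (a:ℕ) ∨ (y:ℕ) = ((a:ℕ)+1)%4 := by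
    intro y hy hy4
    by_contra hne
    push_neg at hne
    have h1 := hcl hy has (fun h => hne.1 (by rw [h]))
    have h2 := hcl hy has' (fun h => hne.2 (by rw [h]))
    rw [adj_iff] at h1 h2
    simp only [Fin.val_mk] at h1 h2
    omega
  ext w
  simp only [clOf, Set.mem_setOf_eq, Fin.val_mk]
  constructor
  · rintro (hw | hw | ⟨j, hw⟩)
    · have : w = (⟨(a:ℕ), by omega⟩ : Fin (3*k+4)) := Fin.ext hw
      rw [this]; exact has
    · have : w = (⟨((a:ℕ)+1)%4, by omega⟩ : Fin (3*k+4)) := Fin.ext hw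
      rw [this]; exact has'
    · have : w = (⟨4+3*(j:ℕ)+((f j):ℕ), by have := j.isLt; have := (f j).isLt; omega⟩ :
          Fin (3*k+4)) := Fin.ext hw
      rw [this]; exact hf j
  · intro hw
    by_cases hw4 : (w:ℕ) < 4
    · rcases hbase2 w hw hw4 with h | h
      · exact Or.inl h
      · exact Or.inr (Or.inl h)
    · have hjk : ((w:ℕ)-4)/3 < k := by have := w.isLt; omega
      exact Or.inr (Or.inr ⟨⟨((w:ℕ)-4)/3, hjk⟩, huniq w hw (by omega) _ rfl⟩)

end MMaux
namespace MMaux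

lemma numMaxCliques_eq (k : ℕ) : numMaxCliques (Gmm (3*k+4)) = 4 * 3 ^ k := by
  have e : (Fin 4 × (Fin k → Fin 3)) ≃ {s : Set (Fin (3*k+4)) // MaxClique (Gmm (3*k+4)) s} := by
    refine Equiv.ofBijective (fun p => ⟨clOf k p.1 p.2, maxclique_clOf k p.1 p.2⟩) ⟨?_, ?_⟩
    · intro p q h
      exact clOf_inj k (congrArg Subtype.val h)
    · rintro ⟨s, hs⟩
      obtain ⟨a, f, hf⟩ := clOf_surj k s hs
      exact ⟨(a, f), Subtype.ext hf⟩
  rw [numMaxCliques, ← Nat.card_congr e]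
  simp [Nat.card_eq_fintype_card]

end MMaux

theorem stmt_11 (n : ℕ) (h4 : 4 ≤ n) (h3 : n % 3 = 1) :
    numMaxCliques (Gmm n) = 4 * 3 ^ ((n - 4) / 3) := by
  obtain ⟨k, hk⟩ : ∃ k, n = 3*k+4 := ⟨(n-4)/3, by omega⟩
  subst hk
  have : (3*k+4-4)/3 = k := by omega
  rw [this, MMaux.numMaxCliques_eq]
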